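/- Let a ∈ {3, 4} and let x, y, z be integers with 0 < x < y < z and gcd(x, y, z) = 1 satisfying yz = a(y − x)(z − x), xz = a(y − x)(z − y), and xy = (z − x)(z − y). Then either a = 3 and (x, y, z) = (1, 2, 3), or a = 4 and (x, y, z) = (3, 5, 8). Equivalently, the only nondegenerate codimension-3 degree sequences D with (π_0(D), π_1(D), π_2(D), π_3(D)) = (1, a, a, 1) for a ∈ {3,4} are (0,1,2,3) for a = 3 and (0,3,5,8) for a = 4. -/

import Mathlib

/-- For `a ∈ {3, 4}`, the only integers `0 < x < y < z` with `gcd(x, y, z) = 1`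
satisfying `yz = a(y − x)(z − x)`, `xz = a(y − x)(z − y)`, and
`xy = (z − x)(z − y)` are `(1, 2, 3)` when `a = 3` and `(3, 5, 8)` when `a = 4`;
i.e., the only nondegenerate codimension-3 degree sequences with
`π(D) = (1, a, a, 1)` are `(0,1,2,3)` for `a = 3` and `(0,3,5,8)` for `a = 4`. -/
theorem degree_sequences_pi_1aa1
    (a x y z : ℤ) (ha : a = 3 ∨ a = 4)
    (hx : 0 < x) (hxy : x < y) (hyz : y < z)
    (hgcd : Int.gcd x (Int.gcd y z) = 1)
    (h1 : y * z = a * (y - x) * (z - x))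
    (h2 : x * z = a * (y - x) * (z - y))
    (h3 : x * y = (z - x) * (z - y)) :
    (a = 3 ∧ x = 1 ∧ y = 2 ∧ z = 3) ∨ (a = 4 ∧ x = 3 ∧ y = 5 ∧ z = 8) := by
  have hu : (0:ℤ) < y - x := by linarith
  have key : (y - x) * z = (y - x) * (a * (y - x)) := by linear_combination h1 - h2
  have hz : z = a * (y - x) := mul_left_cancel₀ hu.ne' key
  subst hz
  have ha0 : (0:ℤ) < a := by rcases ha with rfl | rfl <;> norm_num
  have hau : (0:ℤ) < a * (y - x) := mul_pos ha0 hu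
  have h6 : (a * (y - x)) * (x + y) = (a * (y - x)) * (a * (y - x)) := by
    linear_combination h3
  have h7 : x + y = a * (y - x) := mul_left_cancel₀ hau.ne' h6
  rcases ha with rfl | rfl
  · -- a = 3: x + y = 3(y-x), so y = 2x
    have hy2 : y = 2 * x := by omega
    have hxd : x ∣ (1 : ℤ) := by
      have h8 : x ∣ Int.gcd y (3 * (y - x)) :=
        Int.dvd_coe_gcd ⟨2, by omega⟩ ⟨3, by omega⟩
      have h9 : x ∣ (Int.gcd x (Int.gcd y (3 * (y - x))) : ℤ) :=
        Int.dvd_coe_gcd dvd_rfl h8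
      rw [hgcd] at h9
      simpa using h9
    have hx1 : x = 1 := by
      have := Int.le_of_dvd one_pos hxd
      omega
    left
    refine ⟨rfl, hx1, by omega, by omega⟩
  · -- a = 4: x + y = 4(y-x), so 5x = 3y
    have h53 : 5 * x = 3 * y := by omega
    have h3x : (3:ℤ) ∣ x := by omega
    obtain ⟨t, rfl⟩ : ∃ t, x = 3 * t := ⟨x / 3, by omega⟩
    have hy5 : y = 5 * t := by omega
    have ht0 : (0:ℤ) < t := by omega
    have htd : t ∣ (1 : ℤ) := by
      have h8 : t ∣ Int.gcd y (4 * (y - 3 * t)) :=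
        Int.dvd_coe_gcd ⟨5, by omega⟩ ⟨8, by omega⟩
      have h9 : t ∣ (Int.gcd (3 * t) (Int.gcd y (4 * (y - 3 * t))) : ℤ) :=
        Int.dvd_coe_gcd ⟨3, by ring⟩ h8
      rw [hgcd] at h9
      simpa using h9
    have ht1 : t = 1 := by
      have := Int.le_of_dvd one_pos htd
      omega
    right
    refine ⟨rfl, by omega, by omega, by omega⟩
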